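/- Let x^{(n)} be the projected gradient iterates satisfying Condition (B), and let x̃ be any minimizer of ‖Kx - y‖² over B_R. Then ‖x^{(n+1)} - x̃‖ ≤ ‖x^{(n)} - x̃‖ for every n, i.e. the iterates are Fejér monotone with respect to the set of minimizers. -/

import Mathlib

set_option maxHeartbeats 1000000


open scoped ENNReal NNReal RealInnerProductSpace

/-- The `ℓ¹`-ball of radius `R` inside `ℓ²(I)`. -/
noncomputable def l1Ball (I : Type*) (R : ℝ) : Set (lp (fun _ : I => ℝ) 2) :=
  {x | (∑' i, (‖x i‖₊ : ℝ≥0∞)) ≤ ENNReal.ofReal R}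

lemma l1Ball_convex (I : Type*) (R : ℝ) : Convex ℝ (l1Ball I R) := by
  intro p hp q hq a b ha hb hab
  have hcoe : ∀ i, (a • p + b • q) i = a * p i + b * q i := by
    intro i
    simp [lp.coeFn_add, lp.coeFn_smul, Pi.add_apply, Pi.smul_apply, smul_eq_mul]
    exact rfl
  have hab' : (‖a‖₊ + ‖b‖₊ : ℝ≥0) = 1 := by
    apply NNReal.coe_injective
    push_cast
    rw [Real.norm_of_nonneg ha, Real.norm_of_nonneg hb]
    simpa using hab
  calc (∑' i, (‖(a • p + b • q) i‖₊ : ℝ≥0∞))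
      ≤ ∑' i, ((‖a‖₊ : ℝ≥0∞) * ‖p i‖₊ + (‖b‖₊ : ℝ≥0∞) * ‖q i‖₊) := by
        apply ENNReal.tsum_le_tsum
        intro i
        rw [hcoe i]
        calc (‖a * p i + b * q i‖₊ : ℝ≥0∞) ≤ (‖a * p i‖₊ : ℝ≥0∞) + ‖b * q i‖₊ := by
              exact_mod_cast nnnorm_add_le _ _
          _ = (‖a‖₊ : ℝ≥0∞) * ‖p i‖₊ + (‖b‖₊ : ℝ≥0∞) * ‖q i‖₊ := by
              rw [nnnorm_mul, nnnorm_mul]; push_cast; ring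
    _ = (‖a‖₊ : ℝ≥0∞) * ∑' i, (‖p i‖₊ : ℝ≥0∞) + (‖b‖₊ : ℝ≥0∞) * ∑' i, (‖q i‖₊ : ℝ≥0∞) := by
        rw [ENNReal.tsum_add, ENNReal.tsum_mul_left, ENNReal.tsum_mul_left]
    _ ≤ (‖a‖₊ : ℝ≥0∞) * ENNReal.ofReal R + (‖b‖₊ : ℝ≥0∞) * ENNReal.ofReal R := by
        gcongr
        · exact hp
        · exact hq
    _ = ENNReal.ofReal R := by
        rw [← add_mul, ← ENNReal.coe_add, hab', ENNReal.coe_one, one_mul]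

/-- If the projected gradient iterates satisfy Condition (B) and `xt` is any minimizer of
`‖Kx - y‖²` over `B_R`, then `‖x (n+1) - xt‖ ≤ ‖x n - xt‖` for every `n` (Fejér
monotonicity with respect to the set of minimizers). -/
theorem stmt18 {I : Type*} [Countable I] {H : Type*} [NormedAddCommGroup H]
    [InnerProductSpace ℝ H] [CompleteSpace H]
    (K : lp (fun _ : I => ℝ) 2 →L[ℝ] H) (hK : ‖K‖ < 1) (y : H) (R : ℝ) (hR : 0 < R)
    (r : ℝ) (hr : r = ‖(ContinuousLinearMap.adjoint K).comp K‖) (hr1 : r < 1)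
    (β : ℕ → ℝ) (βbar : ℝ) (hβ1 : ∀ n, 1 ≤ β n) (hβ2 : ∀ n, β n ≤ βbar)
    (x : ℕ → lp (fun _ : I => ℝ) 2)
    (hiter : ∀ n : ℕ, x (n + 1) ∈ l1Ball I R ∧
      ∀ w ∈ l1Ball I R,
        ‖x (n + 1) - (x n + β n • (ContinuousLinearMap.adjoint K) (y - K (x n)))‖ ≤
          ‖w - (x n + β n • (ContinuousLinearMap.adjoint K) (y - K (x n)))‖)
    (hB2 : ∀ n : ℕ, β n * ‖K (x (n + 1) - x n)‖ ^ 2 ≤ r * ‖x (n + 1) - x n‖ ^ 2)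
    (xt : lp (fun _ : I => ℝ) 2) (hxt : xt ∈ l1Ball I R)
    (hmin : ∀ w ∈ l1Ball I R, ‖K xt - y‖ ^ 2 ≤ ‖K w - y‖ ^ 2) :
    ∀ n : ℕ, ‖x (n + 1) - xt‖ ≤ ‖x n - xt‖ := by
  intro n
  obtain ⟨hvC, hproj0⟩ := hiter n
  have hC : Convex ℝ (l1Ball I R) := l1Ball_convex I R
  set u : lp (fun _ : I => ℝ) 2 := x n with hu
  set v : lp (fun _ : I => ℝ) 2 := x (n + 1) with hv
  set z : lp (fun _ : I => ℝ) 2 :=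
    u + β n • (ContinuousLinearMap.adjoint K) (y - K u) with hzdef
  -- variational inequality for the projection, proved directly via convexity
  have hvar : ∀ w ∈ l1Ball I R, (inner ℝ (z - v) (w - v) : ℝ) ≤ 0 := by
    intro w hw
    by_contra hcon
    push_neg at hcon
    set c : ℝ := (inner ℝ (z - v) (w - v) : ℝ) with hc
    set M : ℝ := ‖w - v‖ ^ 2 with hM
    have hM0 : 0 ≤ M := sq_nonneg _
    set t : ℝ := min 1 (c / (M + 1)) with htdef
    have ht0 : 0 < t := lt_min one_pos (div_pos hcon (by linarith))
    have ht1 : t ≤ 1 := min_le_left _ _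
    have htc : t * (M + 1) ≤ c := by
      have h := min_le_right 1 (c / (M + 1))
      rw [le_div_iff₀ (by linarith : (0:ℝ) < M + 1)] at h
      exact h
    have hvt : v + t • (w - v) ∈ l1Ball I R := by
      have h := hC hvC hw (by linarith : (0:ℝ) ≤ 1 - t) ht0.le (by ring)
      have he : (1 - t) • v + t • w = v + t • (w - v) := by
        rw [sub_smul, smul_sub, one_smul]; abel
      rwa [he] at h
    have hineq : ‖v - z‖ ≤ ‖v + t • (w - v) - z‖ := hproj0 _ hvt
    have hsq : ‖v - z‖ ^ 2 ≤ ‖v + t • (w - v) - z‖ ^ 2 :=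
      pow_le_pow_left₀ (norm_nonneg _) hineq 2
    have hexp : ‖v + t • (w - v) - z‖ ^ 2
        = ‖v - z‖ ^ 2 + 2 * t * (inner ℝ (v - z) (w - v) : ℝ) + t ^ 2 * M := by
      have he : v + t • (w - v) - z = (v - z) + t • (w - v) := by abel
      rw [he, norm_add_sq_real, real_inner_smul_right, norm_smul, mul_pow,
        Real.norm_eq_abs, sq_abs, hM]
      ring
    have hiv : (inner ℝ (v - z) (w - v) : ℝ) = -c := by
      have he : v - z = -(z - v) := by abel
      rw [he, inner_neg_left, hc]
    rw [hexp, hiv] at hsq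
    nlinarith [mul_pos ht0 hcon, mul_le_mul_of_nonneg_left htc ht0.le, sq_nonneg t]
  have hzv : z - v = (u - v) + β n • (ContinuousLinearMap.adjoint K) (y - K u) := by
    rw [hzdef]; abel
  have h1 : (inner ℝ (u - v) (xt - v) : ℝ) + β n * (inner ℝ (y - K u) (K (xt - v)) : ℝ) ≤ 0 := by
    have := hvar xt hxt
    rwa [hzv, inner_add_left, real_inner_smul_left,
      ContinuousLinearMap.adjoint_inner_left] at this
  -- decompose in H
  have e1 : K (xt - v) = (y - K v) - (y - K u) + ((y - K u) - (y - K xt)) := by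
    rw [map_sub]; abel
  have e2 : (y - K u) - (y - K v) = K (v - u) := by rw [map_sub]; abel
  have e3 : ‖(y - K u) - (y - K v)‖ ^ 2
      = ‖y - K u‖ ^ 2 - 2 * (inner ℝ (y - K u) (y - K v) : ℝ) + ‖y - K v‖ ^ 2 :=
    norm_sub_sq_real _ _
  have e4 : ‖(y - K u) - (y - K xt)‖ ^ 2
      = ‖y - K u‖ ^ 2 - 2 * (inner ℝ (y - K u) (y - K xt) : ℝ) + ‖y - K xt‖ ^ 2 :=
    norm_sub_sq_real _ _
  have h1' : (inner ℝ (u - v) (xt - v) : ℝ)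
      + β n * ((inner ℝ (y - K u) (y - K v) : ℝ) - (inner ℝ (y - K u) (y - K xt) : ℝ)) ≤ 0 := by
    have : (inner ℝ (y - K u) (K (xt - v)) : ℝ)
        = (inner ℝ (y - K u) (y - K v) : ℝ) - (inner ℝ (y - K u) (y - K xt) : ℝ) := by
      rw [e1]
      have : (y - K v) - (y - K u) + ((y - K u) - (y - K xt))
          = (y - K v) - (y - K xt) := by abel
      rw [this, inner_sub_right]
    rwa [this] at h1
  -- minimality of xt tested at v
  have h2 : ‖y - K xt‖ ^ 2 ≤ ‖y - K v‖ ^ 2 := by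
    have := hmin v hvC
    rwa [norm_sub_rev (K xt) y, norm_sub_rev (K v) y] at this
  -- Condition (B)
  have hB : β n * ‖K (v - u)‖ ^ 2 ≤ r * ‖v - u‖ ^ 2 := hB2 n
  have hr0 : 0 ≤ r := hr ▸ norm_nonneg _
  have hβ0 : (0:ℝ) < β n := lt_of_lt_of_le one_pos (hβ1 n)
  -- norm expansion
  have hA : ‖u - xt‖ ^ 2 = ‖u - v‖ ^ 2 + 2 * (inner ℝ (u - v) (v - xt) : ℝ) + ‖v - xt‖ ^ 2 := by
    have h : u - xt = (u - v) + (v - xt) := by abel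
    rw [h, norm_add_sq_real]
  have hflip : (inner ℝ (u - v) (xt - v) : ℝ) = - (inner ℝ (u - v) (v - xt) : ℝ) := by
    have h : xt - v = -(v - xt) := by abel
    rw [h, inner_neg_right]
  have hKuv : ‖(y - K u) - (y - K v)‖ ^ 2 = ‖K (v - u)‖ ^ 2 := by rw [e2]
  have hnuv : ‖v - u‖ = ‖u - v‖ := norm_sub_rev _ _
  have q1 : 2 * (inner ℝ (y - K u) (y - K v) : ℝ)
      = ‖y - K u‖ ^ 2 + ‖y - K v‖ ^ 2 - ‖K (v - u)‖ ^ 2 := by linarith [e3, hKuv]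
  have q2 : 2 * (inner ℝ (y - K u) (y - K xt) : ℝ)
      = ‖y - K u‖ ^ 2 + ‖y - K xt‖ ^ 2 - ‖(y - K u) - (y - K xt)‖ ^ 2 := by linarith [e4]
  have q3 : β n * (2 * (inner ℝ (y - K u) (y - K v) : ℝ) - 2 * (inner ℝ (y - K u) (y - K xt) : ℝ))
      = β n * (‖y - K v‖ ^ 2 - ‖y - K xt‖ ^ 2
          + ‖(y - K u) - (y - K xt)‖ ^ 2 - ‖K (v - u)‖ ^ 2) := by rw [q1, q2]; ring
  have hB' : β n * ‖K (v - u)‖ ^ 2 ≤ r * ‖u - v‖ ^ 2 := hB.trans_eq (by rw [hnuv])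
  have pf1 : 0 ≤ β n * (‖y - K v‖ ^ 2 - ‖y - K xt‖ ^ 2) :=
    mul_nonneg hβ0.le (sub_nonneg.mpr h2)
  have pf2 : 0 ≤ β n * ‖(y - K u) - (y - K xt)‖ ^ 2 := mul_nonneg hβ0.le (sq_nonneg _)
  have pf3 : r * ‖u - v‖ ^ 2 ≤ 1 * ‖u - v‖ ^ 2 :=
    mul_le_mul_of_nonneg_right hr1.le (sq_nonneg _)
  have key : ‖v - xt‖ ^ 2 ≤ ‖u - xt‖ ^ 2 := by
    nlinarith [h1', q3, hB', pf1, pf2, pf3, hA, hflip]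
  have := Real.sqrt_le_sqrt key
  rwa [Real.sqrt_sq (norm_nonneg _), Real.sqrt_sq (norm_nonneg _)] at this
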